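/- Let g(x) = Σ_{j=0}^{d} g_j x^j ∈ ℂ[x] be a nonzero polynomial all of whose complex roots have absolute value at least 1, let k be an integer with k > d (strictly), let λ ∈ ℂ with |λ| = 1, and set f(x) = λ x^k · ḡ(x^{-1}) = λ Σ_{j=0}^{d} conj(g_j) x^{k-j}. Then for any α, β ∈ ℂ not both zero, m(α f + β g) = m(g) + log max{|α|, |β|}. -/

import Mathlib

open MeasureTheory Real Complex Polynomial

noncomputable def circ (t : ℝ) : ℂ := Complex.exp (t * Complex.I)

noncomputable def Complex.abs : AbsoluteValue ℂ ℝ := NormedField.toAbsoluteValue ℂ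

lemma Complex.abs_apply' (z : ℂ) : Complex.abs z = ‖z‖ := rfl

lemma Complex.abs_conj (z : ℂ) : Complex.abs ((starRingEnd ℂ) z) = Complex.abs z :=
  Complex.norm_conj z

lemma Complex.abs_ofReal (r : ℝ) : Complex.abs (r : ℂ) = |r| := Complex.norm_real r

lemma Complex.continuous_abs : Continuous (fun z : ℂ => Complex.abs z) := continuous_norm

lemma Complex.abs_exp_ofReal_mul_I (x : ℝ) : Complex.abs (Complex.exp (x * Complex.I)) = 1 :=
  Complex.norm_exp_ofReal_mul_I x

lemma Complex.sq_abs (z : ℂ) : Complex.abs z ^ 2 = Complex.normSq z := Complex.sq_norm z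

lemma Complex.normSq_eq_abs (z : ℂ) : Complex.normSq z = Complex.abs z ^ 2 :=
  Complex.normSq_eq_norm_sq z

lemma Complex.re_le_abs (z : ℂ) : z.re ≤ Complex.abs z := Complex.re_le_norm z

lemma Complex.abs_re_le_abs (z : ℂ) : |z.re| ≤ Complex.abs z := Complex.abs_re_le_norm z

lemma circ_abs (t : ℝ) : Complex.abs (circ t) = 1 := Complex.abs_exp_ofReal_mul_I t

lemma circ_ne_zero (t : ℝ) : circ t ≠ 0 := Complex.exp_ne_zero _

lemma continuous_circ : Continuous circ := by
  unfold circ; fun_prop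

lemma circ_mul_conj (t : ℝ) : circ t * (starRingEnd ℂ) (circ t) = 1 := by
  rw [Complex.mul_conj]
  norm_cast
  rw [Complex.normSq_eq_abs, circ_abs, one_pow]

lemma circle_avg_holo {R : ℝ} (hR : 1 < R) {F : ℂ → ℂ}
    (hF : DifferentiableOn ℂ F (Metric.closedBall 0 R)) :
    ∫ θ in (0:ℝ)..(2*π), F (circ θ) = 2 * π * F 0 := by
  have hsub : Metric.closedBall (0:ℂ) 1 ⊆ Metric.closedBall 0 R :=
    Metric.closedBall_subset_closedBall hR.le
  have h := (hF.mono hsub).circleIntegral_sub_inv_smul (w := 0)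
    (Metric.mem_ball_self one_pos)
  have h2 : (∮ z in C(0,1), (z - 0)⁻¹ • F z)
      = Complex.I * ∫ θ in (0:ℝ)..(2*π), F (circ θ) := by
    rw [circleIntegral, ← intervalIntegral.integral_const_mul]
    apply intervalIntegral.integral_congr
    intro θ _
    have hz : circleMap 0 1 θ = circ θ := by
      rw [circleMap_zero]; push_cast; rw [one_mul]; rfl
    simp only [deriv_circleMap, hz, smul_eq_mul, sub_zero, circleMap_zero, one_mul]
    have := circ_ne_zero θ
    field_simp
  rw [h2] at h
  have h3 : (2 * ↑π * Complex.I : ℂ) • F 0 = Complex.I * (2 * π * F 0) := by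
    simp [smul_eq_mul]; ring
  rw [h3] at h
  exact mul_left_cancel₀ Complex.I_ne_zero h

lemma integral_log_abs_circ_sub_of_one_lt {a : ℂ} (ha : 1 < Complex.abs a) :
    ∫ θ in (0:ℝ)..(2*π), Real.log (Complex.abs (circ θ - a))
      = 2 * π * Real.log (Complex.abs a) := by
  have ha0 : a ≠ 0 := by
    intro h; rw [h] at ha; simp at ha; linarith
  set R := (1 + Complex.abs a)/2 with hRdef
  have hR1 : 1 < R := by rw [hRdef]; linarith
  have hRa : R < Complex.abs a := by rw [hRdef]; linarith
  set F : ℂ → ℂ := fun z => Complex.log (1 - z/a) with hFdef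
  have habs : ∀ z : ℂ, Complex.abs z ≤ R → Complex.abs (z/a) < 1 := by
    intro z hz
    rw [map_div₀, div_lt_one (by linarith)]
    linarith
  have hmem : ∀ z : ℂ, Complex.abs z ≤ R → (1 - z/a) ∈ Complex.slitPlane := by
    intro z hz
    rw [Complex.mem_slitPlane_iff]
    left
    have h1 : |(z/a).re| ≤ Complex.abs (z/a) := Complex.abs_re_le_abs _
    have h2 := habs z hz
    have : (1 - z/a).re = 1 - (z/a).re := by simp
    rw [this]
    cases abs_le.mp h1 with
    | intro h3 h4 => linarith
  have hF : DifferentiableOn ℂ F (Metric.closedBall 0 R) := by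
    intro z hz
    have hz' : Complex.abs z ≤ R := by
      simpa [Metric.mem_closedBall, Complex.dist_eq, Complex.abs_apply'] using hz
    apply DifferentiableAt.differentiableWithinAt
    have hd1 : DifferentiableAt ℂ (fun w : ℂ => 1 - w/a) z :=
      ((differentiable_const (1:ℂ)).sub (differentiable_id.div_const a)).differentiableAt
    exact (Complex.differentiableAt_log (hmem z hz')).comp z hd1
  have havg := circle_avg_holo hR1 hF
  have hF0 : F 0 = 0 := by simp [hFdef]
  have hcontF : ContinuousOn (fun θ : ℝ => F (circ θ)) (Set.uIcc 0 (2*π)) := by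
    apply ContinuousOn.comp (hF.continuousOn) (continuous_circ.continuousOn)
    intro θ _
    simp [Metric.mem_closedBall, Complex.dist_eq, circ, Complex.norm_exp_ofReal_mul_I, hR1.le]
  have hInt : IntervalIntegrable (fun θ : ℝ => F (circ θ)) volume 0 (2*π) :=
    hcontF.intervalIntegrable
  have hre := Complex.reCLM.intervalIntegral_comp_comm hInt
  have hne : ∀ θ : ℝ, Complex.abs (1 - circ θ / a) ≠ 0 := by
    intro θ
    have := habs (circ θ) (by rw [circ_abs]; linarith)
    intro h
    rw [_root_.map_eq_zero, sub_eq_zero] at h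
    rw [← h] at this
    simp at this
  have hpt : ∀ θ : ℝ, Real.log (Complex.abs (circ θ - a))
      = Real.log (Complex.abs a) + (F (circ θ)).re := by
    intro θ
    have hfac : circ θ - a = -a * (1 - circ θ / a) := by
      field_simp
      ring
    rw [hfac, map_mul, map_neg_eq_map]
    rw [Real.log_mul (by positivity) (hne θ)]
    have : (F (circ θ)).re = Real.log (Complex.abs (1 - circ θ / a)) := by
      rw [hFdef]; exact Complex.log_re _
    rw [this]
  calc ∫ θ in (0:ℝ)..(2*π), Real.log (Complex.abs (circ θ - a))
      = ∫ θ in (0:ℝ)..(2*π), (Real.log (Complex.abs a) + (F (circ θ)).re) :=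
        intervalIntegral.integral_congr (fun θ _ => hpt θ)
    _ = (∫ θ in (0:ℝ)..(2*π), Real.log (Complex.abs a))
        + ∫ θ in (0:ℝ)..(2*π), (F (circ θ)).re := by
        apply intervalIntegral.integral_add (intervalIntegrable_const)
        exact (Complex.continuous_re.comp_continuousOn hcontF).intervalIntegrable
    _ = 2 * π * Real.log (Complex.abs a) := by
        rw [intervalIntegral.integral_const]
        have : ∫ θ in (0:ℝ)..(2*π), (F (circ θ)).re = 0 := by
          have : (fun θ : ℝ => (F (circ θ)).re) = fun θ : ℝ => Complex.reCLM (F (circ θ)) := rfl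
          rw [this, hre, havg, hF0]
          simp
        rw [this]
        simp [smul_eq_mul]
        try ring

lemma sq_abs_expand (z w : ℂ) : Complex.abs (z - w)^2
    = (z.re - w.re)^2 + (z.im - w.im)^2 := by
  rw [Complex.sq_abs, Complex.normSq_apply]
  simp [Complex.sub_re, Complex.sub_im]
  ring

lemma abs_sub_real_mul_mono {z a : ℂ} (hz : Complex.abs z = 1) (ha : Complex.abs a = 1)
    {r r' : ℝ} (h1 : 1 ≤ r) (hrr' : r ≤ r') :
    Complex.abs (z - r*a) ≤ Complex.abs (z - r'*a) := by
  have hz2 : z.re^2 + z.im^2 = 1 := by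
    have h := Complex.sq_abs z
    rw [hz, Complex.normSq_apply] at h
    nlinarith [h]
  have ha2 : a.re^2 + a.im^2 = 1 := by
    have h := Complex.sq_abs a
    rw [ha, Complex.normSq_apply] at h
    nlinarith [h]
  have ht : z.re*a.re + z.im*a.im ≤ 1 := by
    have h := Complex.re_le_abs (z * (starRingEnd ℂ) a)
    rw [map_mul, Complex.abs_conj, hz, ha, mul_one] at h
    simp [Complex.mul_re, Complex.conj_re, Complex.conj_im] at h
    linarith
  apply le_of_pow_le_pow_left₀ two_ne_zero (AbsoluteValue.nonneg _ _)
  have e1 := sq_abs_expand z ((r:ℂ)*a)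
  have e2 := sq_abs_expand z ((r':ℂ)*a)
  have hd : (z.re - ((r':ℂ) * a).re) ^ 2 + (z.im - ((r':ℂ) * a).im) ^ 2
      - ((z.re - ((r:ℂ) * a).re) ^ 2 + (z.im - ((r:ℂ) * a).im) ^ 2)
      = (r' - r) * ((r + r') * (a.re^2 + a.im^2) - 2*(z.re*a.re + z.im*a.im)) := by
    simp only [Complex.mul_re, Complex.mul_im, Complex.ofReal_re, Complex.ofReal_im]
    ring
  rw [ha2, mul_one] at hd
  have hprod : 0 ≤ (r' - r) * ((r + r') - 2*(z.re*a.re + z.im*a.im)) :=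
    mul_nonneg (sub_nonneg.mpr hrr') (by linarith)
  rw [e1, e2]
  linarith

lemma abs_one_sub_conj_mul_le {a z : ℂ} (ha : 1 ≤ Complex.abs a) (hz : Complex.abs z ≤ 1) :
    Complex.abs (1 - (starRingEnd ℂ) a * z) ≤ Complex.abs (z - a) := by
  have hz2 : z.re^2 + z.im^2 ≤ 1 := by
    have h := Complex.sq_abs z
    rw [Complex.normSq_apply] at h
    nlinarith [Complex.abs.nonneg z]
  have ha2 : 1 ≤ a.re^2 + a.im^2 := by
    have h := Complex.sq_abs a
    rw [Complex.normSq_apply] at h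
    nlinarith
  apply le_of_pow_le_pow_left₀ two_ne_zero (AbsoluteValue.nonneg _ _)
  have e1 := sq_abs_expand 1 ((starRingEnd ℂ) a * z)
  have e2 := sq_abs_expand z a
  have hd : (z.re - a.re) ^ 2 + (z.im - a.im) ^ 2
      - (((1:ℂ).re - ((starRingEnd ℂ) a * z).re) ^ 2 + ((1:ℂ).im - ((starRingEnd ℂ) a * z).im) ^ 2)
      = (a.re^2 + a.im^2 - 1) * (1 - (z.re^2 + z.im^2)) := by
    simp only [Complex.mul_re, Complex.mul_im, Complex.conj_re, Complex.conj_im,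
      Complex.one_re, Complex.one_im]
    ring
  have hprod : 0 ≤ (a.re^2 + a.im^2 - 1) * (1 - (z.re^2 + z.im^2)) :=
    mul_nonneg (by linarith) (by linarith)
  rw [e1, e2]
  linarith

lemma countable_circ_eq (a : ℂ) : {θ : ℝ | circ θ = a}.Countable := by
  by_cases h : ∃ θ₀ : ℝ, circ θ₀ = a
  · obtain ⟨θ₀, h0⟩ := h
    apply Set.Countable.mono _ (Set.countable_range (fun n : ℤ => θ₀ + n * (2*π)))
    intro θ hθ
    have hex : Complex.exp (θ*Complex.I) = Complex.exp (θ₀*Complex.I) := by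
      show circ θ = circ θ₀
      rw [h0]; exact hθ
    rw [Complex.exp_eq_exp_iff_exists_int] at hex
    obtain ⟨n, hn⟩ := hex
    refine ⟨n, ?_⟩
    have hn' : (θ:ℂ) * Complex.I = ((θ₀:ℝ) + (n:ℝ) * (2*π)) * Complex.I := by
      rw [hn]; push_cast; ring
    have := mul_right_cancel₀ Complex.I_ne_zero hn'
    exact_mod_cast this.symm
  · push_neg at h
    have : {θ : ℝ | circ θ = a} = ∅ := by
      ext θ; simp [h θ]
    rw [this]
    exact Set.countable_empty

lemma integral_log_abs_circ_sub_of_eq_one {a : ℂ} (ha : Complex.abs a = 1) :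
    IntervalIntegrable (fun θ : ℝ => Real.log (Complex.abs (circ θ - a))) volume 0 (2*π) ∧
    ∫ θ in (0:ℝ)..(2*π), Real.log (Complex.abs (circ θ - a)) = 0 := by
  have hπ : (0:ℝ) ≤ 2*π := by positivity
  set μ : Measure ℝ := volume.restrict (Set.Ioc (0:ℝ) (2*π)) with hμ
  set r : ℕ → ℝ := fun n => 1 + 1/(n+1) with hr
  have hr1 : ∀ n, 1 < r n := by
    intro n; rw [hr]; simp only; have : (0:ℝ) < 1/(n+1) := by positivity
    linarith
  have hr0 : r 0 = 2 := by norm_num [hr]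
  have hranti : ∀ m n : ℕ, m ≤ n → r n ≤ r m := by
    intro m n hmn
    simp only [hr]
    have : (1:ℝ)/(n+1) ≤ 1/(m+1) := by
      apply one_div_le_one_div_of_le (by positivity)
      have : (m:ℝ) ≤ n := by exact_mod_cast hmn
      linarith
    linarith
  set u : ℕ → ℝ → ℝ := fun n θ => Real.log (Complex.abs (circ θ - (r n : ℝ)*a)) with hu
  set U : ℝ → ℝ := fun θ => Real.log (Complex.abs (circ θ - a)) with hU
  have habsr : ∀ n, Complex.abs (((r n : ℝ):ℂ)*a) = r n := by
    intro n
    rw [map_mul, Complex.abs_ofReal, ha, mul_one, abs_of_pos (by linarith [hr1 n])]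
  have hpos : ∀ n θ, 0 < Complex.abs (circ θ - (r n : ℝ)*a) := by
    intro n θ
    have h2 := norm_sub_norm_le (((r n:ℝ):ℂ)*a) (circ θ)
    rw [← Complex.abs_apply', ← Complex.abs_apply', ← Complex.abs_apply', habsr, circ_abs] at h2
    have h3 : Complex.abs (((r n:ℝ):ℂ)*a - circ θ) = Complex.abs (circ θ - ((r n:ℝ):ℂ)*a) := by
      rw [← Complex.abs.map_neg]; ring_nf
    rw [h3] at h2
    linarith [hr1 n]
  have hucont : ∀ n, Continuous (u n) := by
    intro n
    have hinner : Continuous (fun θ : ℝ => Complex.abs (circ θ - ((r n:ℝ):ℂ)*a)) :=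
      Complex.continuous_abs.comp (continuous_circ.sub continuous_const)
    exact hinner.log (fun θ => ne_of_gt (hpos n θ))
  have hUmeas : Measurable U :=
    Real.measurable_log.comp
      (Complex.continuous_abs.comp (continuous_circ.sub continuous_const)).measurable
  have huint : ∀ n, Integrable (u n) μ := fun n => ((hucont n).intervalIntegrable 0 (2*π)).1
  have hval : ∀ n, ∫ θ, u n θ ∂μ = 2*π*Real.log (r n) := by
    intro n
    have h := integral_log_abs_circ_sub_of_one_lt (a := ((r n : ℝ):ℂ)*a)
      (by rw [habsr]; exact hr1 n)
    rw [intervalIntegral.integral_of_le hπ, habsr] at h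
    exact h
  have hanti : ∀ θ, Antitone fun n => u n θ := by
    intro θ m n hmn
    apply Real.log_le_log (hpos n θ)
    exact abs_sub_real_mul_mono (circ_abs θ) ha (hr1 n).le (hranti m n hmn)
  have hub : ∀ θ, U θ ≤ u 0 θ := by
    intro θ
    by_cases habs0 : Complex.abs (circ θ - a) = 0
    · have hca : circ θ = a := by
        rwa [_root_.map_eq_zero, sub_eq_zero] at habs0
      have h1 : U θ = 0 := by rw [hU]; simp [habs0]
      have h2 : u 0 θ = 0 := by
        rw [hu]; simp only [hca, hr0]
        have : a - ((2:ℝ):ℂ)*a = -a := by push_cast; ring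
        rw [this, Complex.abs.map_neg, ha, Real.log_one]
      rw [h1, h2]
    · apply Real.log_le_log (lt_of_le_of_ne (Complex.abs.nonneg _) (Ne.symm habs0))
      have h := abs_sub_real_mul_mono (circ_abs θ) ha (le_refl (1:ℝ))
        (by linarith [hr1 0] : (1:ℝ) ≤ r 0)
      simpa using h
  have hae_ne : ∀ᵐ θ ∂μ, circ θ ≠ a := by
    rw [MeasureTheory.ae_iff]
    have : {θ : ℝ | ¬ circ θ ≠ a} = {θ : ℝ | circ θ = a} := by ext θ; simp
    rw [this]
    exact (countable_circ_eq a).measure_zero μ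
  have hrt : Filter.Tendsto r Filter.atTop (nhds 1) := by
    have h := tendsto_one_div_add_atTop_nhds_zero_nat (𝕜 := ℝ)
    have := Filter.Tendsto.add (tendsto_const_nhds (x := (1:ℝ)) (f := Filter.atTop)) h
    simpa [hr] using this
  have htendae : ∀ᵐ θ ∂μ, Filter.Tendsto (fun n => u n θ) Filter.atTop (nhds (U θ)) := by
    filter_upwards [hae_ne] with θ hθ
    have habs0 : Complex.abs (circ θ - a) ≠ 0 := by
      intro h
      rw [_root_.map_eq_zero, sub_eq_zero] at h
      exact hθ h
    have hin : Continuous (fun s : ℝ => Complex.abs (circ θ - (s:ℂ)*a)) :=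
      Complex.continuous_abs.comp
        (continuous_const.sub (Complex.continuous_ofReal.mul continuous_const))
    have hlog : ContinuousAt (fun s : ℝ => Real.log (Complex.abs (circ θ - (s:ℂ)*a))) 1 := by
      apply ContinuousAt.log hin.continuousAt
      simpa using habs0
    have h := hlog.tendsto.comp hrt
    simp only [Function.comp_def] at h
    simpa [hU] using h
  -- lintegral MCT
  set W : ℝ → ENNReal := fun θ => ENNReal.ofReal (u 0 θ - U θ) with hW
  have hVmeas : ∀ n : ℕ, AEMeasurable (fun θ => ENNReal.ofReal (u 0 θ - u n θ)) μ :=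
    fun n => (((hucont 0).measurable.sub (hucont n).measurable).ennreal_ofReal).aemeasurable
  have hVmono : ∀ θ, Monotone fun n => ENNReal.ofReal (u 0 θ - u n θ) := by
    intro θ m n hmn
    exact ENNReal.ofReal_le_ofReal (by linarith [hanti θ hmn])
  have hVtend : ∀ᵐ θ ∂μ, Filter.Tendsto (fun n => ENNReal.ofReal (u 0 θ - u n θ))
      Filter.atTop (nhds (W θ)) := by
    filter_upwards [htendae] with θ hθ
    exact (ENNReal.continuous_ofReal.tendsto _).comp (tendsto_const_nhds.sub hθ)
  have hMCT := MeasureTheory.lintegral_tendsto_of_tendsto_of_monotone hVmeas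
    (Filter.Eventually.of_forall hVmono) hVtend
  have hVn_lint : ∀ n, ∫⁻ θ, ENNReal.ofReal (u 0 θ - u n θ) ∂μ
      = ENNReal.ofReal (2*π*Real.log 2 - 2*π*Real.log (r n)) := by
    intro n
    have hsint : Integrable (fun θ => u 0 θ - u n θ) μ := (huint 0).sub (huint n)
    rw [← MeasureTheory.ofReal_integral_eq_lintegral_ofReal hsint
      (Filter.Eventually.of_forall (fun θ => sub_nonneg.mpr (hanti θ (Nat.zero_le n))))]
    congr 1
    rw [MeasureTheory.integral_sub (huint 0) (huint n), hval 0, hval n, hr0]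
  have htarget : Filter.Tendsto
      (fun n => ENNReal.ofReal (2*π*Real.log 2 - 2*π*Real.log (r n)))
      Filter.atTop (nhds (ENNReal.ofReal (2*π*Real.log 2))) := by
    apply (ENNReal.continuous_ofReal.tendsto _).comp
    have hlog : Filter.Tendsto (fun n => Real.log (r n)) Filter.atTop (nhds 0) := by
      have := (Real.continuousAt_log (one_ne_zero)).tendsto.comp hrt
      simpa [Function.comp_def] using this
    have : Filter.Tendsto (fun n => 2*π*Real.log 2 - 2*π*Real.log (r n))
        Filter.atTop (nhds (2*π*Real.log 2 - 2*π*0)) :=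
      tendsto_const_nhds.sub (hlog.const_mul _)
    simpa using this
  have hWlint : ∫⁻ θ, W θ ∂μ = ENNReal.ofReal (2*π*Real.log 2) := by
    simp_rw [hVn_lint] at hMCT
    exact tendsto_nhds_unique hMCT htarget
  have hvint : Integrable (fun θ => u 0 θ - U θ) μ := by
    constructor
    · exact ((hucont 0).measurable.sub hUmeas).aestronglyMeasurable
    · rw [MeasureTheory.hasFiniteIntegral_iff_norm]
      have hcongr : ∀ θ, ENNReal.ofReal ‖u 0 θ - U θ‖ = W θ := by
        intro θ
        rw [Real.norm_eq_abs, _root_.abs_of_nonneg (sub_nonneg.mpr (hub θ))]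
      rw [MeasureTheory.lintegral_congr hcongr, hWlint]
      exact ENNReal.ofReal_lt_top
  have hUint : Integrable U μ := by
    have heq : U = fun θ => u 0 θ - (u 0 θ - U θ) := by funext θ; ring
    rw [heq]
    exact (huint 0).sub hvint
  have hvval : ∫ θ, (u 0 θ - U θ) ∂μ = 2*π*Real.log 2 := by
    have h1 := MeasureTheory.ofReal_integral_eq_lintegral_ofReal hvint
      (Filter.Eventually.of_forall (fun θ => sub_nonneg.mpr (hub θ)))
    rw [hWlint] at h1
    have h2 : (0:ℝ) ≤ ∫ θ, (u 0 θ - U θ) ∂μ :=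
      MeasureTheory.integral_nonneg (fun θ => sub_nonneg.mpr (hub θ))
    have h3 : (0:ℝ) ≤ 2*π*Real.log 2 := by
      have := Real.log_nonneg (by norm_num : (1:ℝ) ≤ 2)
      positivity
    exact (ENNReal.ofReal_eq_ofReal_iff h2 h3).mp h1
  have hUval : ∫ θ, U θ ∂μ = 0 := by
    have heq : ∀ θ, U θ = u 0 θ - (u 0 θ - U θ) := by intro θ; ring
    rw [MeasureTheory.integral_congr_ae (Filter.Eventually.of_forall heq)]
    rw [MeasureTheory.integral_sub (huint 0) hvint, hval 0, hvval, hr0]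
    ring
  constructor
  · constructor
    · exact hUint
    · rw [Set.Ioc_eq_empty (by simp [not_lt]; positivity)]
      exact MeasureTheory.integrableOn_empty
  · rw [intervalIntegral.integral_of_le hπ]
    exact hUval

lemma root_intervalIntegrable (a : ℂ) :
    IntervalIntegrable (fun θ : ℝ => Real.log (Complex.abs (circ θ - a))) volume 0 (2*π) := by
  by_cases h : Complex.abs a = 1
  · exact (integral_log_abs_circ_sub_of_eq_one h).1
  · have hne : ∀ θ : ℝ, Complex.abs (circ θ - a) ≠ 0 := by
      intro θ hz
      rw [_root_.map_eq_zero, sub_eq_zero] at hz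
      rw [← hz, circ_abs] at h
      exact h rfl
    have hcont : Continuous (fun θ : ℝ => Complex.abs (circ θ - a)) :=
      Complex.continuous_abs.comp (continuous_circ.sub continuous_const)
    exact (hcont.log hne).intervalIntegrable 0 (2*π)

lemma root_integral {a : ℂ} (h : 1 ≤ Complex.abs a) :
    ∫ θ in (0:ℝ)..(2*π), Real.log (Complex.abs (circ θ - a))
      = 2*π*Real.log (Complex.abs a) := by
  rcases eq_or_lt_of_le h with h1 | h1
  · rw [← h1, Real.log_one, mul_zero]
    exact (integral_log_abs_circ_sub_of_eq_one h1.symm).2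
  · exact integral_log_abs_circ_sub_of_one_lt h1

lemma multiset_part (M : Multiset ℂ) (hM : ∀ a ∈ M, 1 ≤ Complex.abs a) :
    IntervalIntegrable
      (fun θ : ℝ => (M.map (fun a => Real.log (Complex.abs (circ θ - a)))).sum) volume 0 (2*π)
    ∧ (1 ≤ (M.map Complex.abs).prod)
    ∧ ∫ θ in (0:ℝ)..(2*π), (M.map (fun a => Real.log (Complex.abs (circ θ - a)))).sum
        = 2*π*Real.log ((M.map Complex.abs).prod) := by
  induction M using Multiset.induction_on with
  | empty => simp
  | cons a s ih =>
    have ha : 1 ≤ Complex.abs a := hM a (Multiset.mem_cons_self a s)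
    have hs : ∀ b ∈ s, 1 ≤ Complex.abs b := fun b hb => hM b (Multiset.mem_cons_of_mem hb)
    obtain ⟨ih1, ih2, ih3⟩ := ih hs
    simp only [Multiset.map_cons, Multiset.sum_cons, Multiset.prod_cons]
    refine ⟨(root_intervalIntegrable a).add ih1, ?_, ?_⟩
    · nlinarith
    · rw [intervalIntegral.integral_add (root_intervalIntegrable a) ih1, root_integral ha, ih3,
        Real.log_mul (by linarith) (by linarith)]
      ring

lemma log_abs_prod_multiset (M : Multiset ℂ) (w : ℂ) (hM : ∀ a ∈ M, w - a ≠ 0) :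
    ((M.map (fun a => Complex.abs (w - a))).prod ≠ 0)
    ∧ Real.log ((M.map (fun a => Complex.abs (w - a))).prod)
        = (M.map (fun a => Real.log (Complex.abs (w - a)))).sum := by
  induction M using Multiset.induction_on with
  | empty => simp
  | cons a s ih =>
    have ha : Complex.abs (w - a) ≠ 0 :=
      Complex.abs.ne_zero (hM a (Multiset.mem_cons_self a s))
    obtain ⟨ih1, ih2⟩ := ih (fun b hb => hM b (Multiset.mem_cons_of_mem hb))
    simp only [Multiset.map_cons, Multiset.prod_cons, Multiset.sum_cons]
    exact ⟨mul_ne_zero ha ih1, by rw [Real.log_mul ha ih1, ih2]⟩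

lemma poly_eval_abs (p : Polynomial ℂ) (w : ℂ) :
    Complex.abs (p.eval w)
      = Complex.abs p.leadingCoeff * ((p.roots.map (fun a => Complex.abs (w - a))).prod) := by
  have hfac := (Polynomial.C_leadingCoeff_mul_prod_multiset_X_sub_C
    (IsAlgClosed.card_roots_eq_natDegree (k := ℂ) (p := p))).symm
  have heval : p.eval w = p.leadingCoeff * ((p.roots.map (fun a => w - a)).prod) := by
    conv_lhs => rw [hfac]
    rw [Polynomial.eval_mul, Polynomial.eval_C, Polynomial.eval_multiset_prod,
      Multiset.map_map]
    congr 2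
    apply Multiset.map_congr rfl
    intro a _
    simp
  rw [heval, map_mul, map_multiset_prod, Multiset.map_map]
  rfl

lemma countable_bad_set (p : Polynomial ℂ) (hp : p ≠ 0) :
    {θ : ℝ | p.eval (circ θ) = 0}.Countable := by
  have hsub : {θ : ℝ | p.eval (circ θ) = 0}
      ⊆ ⋃ a ∈ p.roots.toFinset, {θ : ℝ | circ θ = a} := by
    intro θ hθ
    have : circ θ ∈ p.roots := by
      rw [Polynomial.mem_roots hp]
      exact hθ
    simp only [Set.mem_iUnion]
    exact ⟨circ θ, Multiset.mem_toFinset.mpr this, rfl⟩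
  exact Set.Countable.mono hsub
    (Set.Countable.biUnion (p.roots.toFinset : Finset ℂ).countable_toSet
      (fun a _ => countable_circ_eq a))

lemma poly_integral (p : Polynomial ℂ) (hp : p ≠ 0)
    (hroots : ∀ z : ℂ, p.eval z = 0 → 1 ≤ Complex.abs z) :
    IntervalIntegrable (fun θ : ℝ => Real.log (Complex.abs (p.eval (circ θ)))) volume 0 (2*π)
    ∧ ∫ θ in (0:ℝ)..(2*π), Real.log (Complex.abs (p.eval (circ θ)))
        = 2*π*Real.log (Complex.abs (p.eval 0)) := by
  have hroots' : ∀ a ∈ p.roots, 1 ≤ Complex.abs a := by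
    intro a haM
    exact hroots a ((Polynomial.mem_roots hp).mp haM)
  have hc : Complex.abs p.leadingCoeff ≠ 0 :=
    Complex.abs.ne_zero (Polynomial.leadingCoeff_ne_zero.mpr hp)
  obtain ⟨hint, hprod1, hval⟩ := multiset_part p.roots hroots'
  -- a.e. pointwise identity
  have hae : ∀ᵐ θ : ℝ ∂volume,
      Real.log (Complex.abs (p.eval (circ θ)))
        = Real.log (Complex.abs p.leadingCoeff)
          + (p.roots.map (fun a => Real.log (Complex.abs (circ θ - a)))).sum := by
    rw [MeasureTheory.ae_iff]
    refine MeasureTheory.measure_mono_null ?_ ((countable_bad_set p hp).measure_zero volume)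
    · intro θ hθ
      simp only [Set.mem_setOf_eq] at hθ ⊢
      by_contra hev
      apply hθ
      have hne : ∀ a ∈ p.roots, circ θ - a ≠ 0 := by
        intro a haM hzero
        apply hev
        rw [sub_eq_zero] at hzero
        rw [hzero]
        exact (Polynomial.mem_roots hp).mp haM
      obtain ⟨hne0, hlog⟩ := log_abs_prod_multiset p.roots (circ θ) hne
      rw [poly_eval_abs p (circ θ), Real.log_mul hc hne0, hlog]
  have hint2 : IntervalIntegrable
      (fun θ : ℝ => Real.log (Complex.abs p.leadingCoeff)
        + (p.roots.map (fun a => Real.log (Complex.abs (circ θ - a)))).sum) volume 0 (2*π) :=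
    intervalIntegrable_const.add hint
  have habs0 : Complex.abs (p.eval 0)
      = Complex.abs p.leadingCoeff * (p.roots.map Complex.abs).prod := by
    rw [poly_eval_abs p 0]
    congr 1
    congr 1
    apply Multiset.map_congr rfl
    intro a _
    rw [zero_sub, Complex.abs.map_neg]
  constructor
  · exact hint2.congr_ae (MeasureTheory.ae_restrict_of_ae (hae.mono fun θ h => h.symm))
  · rw [intervalIntegral.integral_congr_ae
      (by filter_upwards [hae] with θ hθ using fun _ => hθ)]
    rw [intervalIntegral.integral_add intervalIntegrable_const hint, hval,
      intervalIntegral.integral_const, habs0,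
      Real.log_mul hc (by linarith), smul_eq_mul]
    ring

lemma abs_mul_sub_inv_conj (z a : ℂ) (hz0 : z ≠ 0) :
    Complex.abs z * Complex.abs (((starRingEnd ℂ) z)⁻¹ - a)
      = Complex.abs (1 - (starRingEnd ℂ) a * z) := by
  have hcz : (starRingEnd ℂ) z ≠ 0 := by
    simpa using hz0
  have hkey : z * (((starRingEnd ℂ) z)⁻¹ - a)
      = (starRingEnd ℂ) ((1:ℂ) - (starRingEnd ℂ) a * z) * z / (starRingEnd ℂ) z := by
    rw [map_sub, map_one, map_mul, Complex.conj_conj]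
    field_simp
  rw [← map_mul, hkey, map_div₀, map_mul, Complex.abs_conj, Complex.abs_conj,
    mul_div_assoc, div_self (Complex.abs.ne_zero hz0), mul_one]

lemma blaschke_prod_le (s : Multiset ℂ) (hs : ∀ a ∈ s, 1 ≤ Complex.abs a)
    {z : ℂ} (hz : Complex.abs z ≤ 1) :
    0 ≤ (s.map (fun a => Complex.abs (1 - (starRingEnd ℂ) a * z))).prod
    ∧ (s.map (fun a => Complex.abs (1 - (starRingEnd ℂ) a * z))).prod
        ≤ (s.map (fun a => Complex.abs (z - a))).prod := by
  induction s using Multiset.induction_on with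
  | empty => simp
  | cons a s ih =>
    have ha := hs a (Multiset.mem_cons_self a s)
    obtain ⟨ih1, ih2⟩ := ih (fun b hb => hs b (Multiset.mem_cons_of_mem hb))
    simp only [Multiset.map_cons, Multiset.prod_cons]
    constructor
    · exact mul_nonneg (Complex.abs.nonneg _) ih1
    · exact mul_le_mul (abs_one_sub_conj_mul_le ha hz) ih2 ih1 (Complex.abs.nonneg _)

section Main

variable (g f : Polynomial ℂ) (k : ℕ) (lam : ℂ)

lemma evalF0 (hk : g.natDegree < k)
    (hf : f = Polynomial.C lam *
      ∑ j ∈ Finset.range (g.natDegree + 1),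
        Polynomial.C ((starRingEnd ℂ) (g.coeff j)) * Polynomial.X ^ (k - j)) :
    f.eval 0 = 0 := by
  rw [hf, Polynomial.eval_mul, Polynomial.eval_C, Polynomial.eval_finset_sum]
  rw [Finset.sum_eq_zero, mul_zero]
  intro j hj
  have hjk : k - j ≠ 0 := by
    have := Finset.mem_range.mp hj
    omega
  simp [zero_pow hjk]

lemma evalF (hk : g.natDegree < k)
    (hf : f = Polynomial.C lam *
      ∑ j ∈ Finset.range (g.natDegree + 1),
        Polynomial.C ((starRingEnd ℂ) (g.coeff j)) * Polynomial.X ^ (k - j)) :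
    ∀ z : ℂ, z ≠ 0 →
      f.eval z = lam * z^k * (starRingEnd ℂ) (g.eval (((starRingEnd ℂ) z)⁻¹)) := by
  intro z hz
  rw [hf, Polynomial.eval_mul, Polynomial.eval_C, Polynomial.eval_finset_sum]
  rw [Polynomial.eval_eq_sum_range (((starRingEnd ℂ) z)⁻¹), map_sum, Finset.mul_sum,
    Finset.mul_sum]
  apply Finset.sum_congr rfl
  intro j hj
  have hjk : j ≤ k := by
    have := Finset.mem_range.mp hj
    omega
  rw [map_mul, map_pow, map_inv₀, Complex.conj_conj]
  simp only [Polynomial.eval_mul, Polynomial.eval_C, Polynomial.eval_pow, Polynomial.eval_X]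
  rw [pow_sub₀ z hz hjk, inv_pow]
  ring

lemma abs_f_lt_abs_g (hg : g ≠ 0)
    (hroots : ∀ z : ℂ, g.eval z = 0 → 1 ≤ Complex.abs z)
    (hk : g.natDegree < k) (hlam : Complex.abs lam = 1)
    (hf : f = Polynomial.C lam *
      ∑ j ∈ Finset.range (g.natDegree + 1),
        Polynomial.C ((starRingEnd ℂ) (g.coeff j)) * Polynomial.X ^ (k - j)) :
    ∀ z : ℂ, Complex.abs z < 1 → Complex.abs (f.eval z) < Complex.abs (g.eval z) := by
  intro z hz1
  have hgz : g.eval z ≠ 0 := by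
    intro h
    have := hroots z h
    linarith
  have hgpos : 0 < Complex.abs (g.eval z) := Complex.abs.pos hgz
  by_cases hz0 : z = 0
  · rw [hz0, evalF0 g f k lam hk hf, map_zero]
    rw [hz0] at hgpos
    exact hgpos
  · have hd : Multiset.card g.roots = g.natDegree :=
      Polynomial.splits_iff_card_roots.mp (IsAlgClosed.splits g)
    have hroots' : ∀ a ∈ g.roots, 1 ≤ Complex.abs a := by
      intro a haM
      exact hroots a ((Polynomial.mem_roots hg).mp haM)
    have hfz : Complex.abs (f.eval z)
        = Complex.abs z ^ k * Complex.abs (g.eval (((starRingEnd ℂ) z)⁻¹)) := by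
      rw [evalF g f k lam hk hf z hz0, map_mul, map_mul, hlam, one_mul, map_pow,
        Complex.abs_conj]
    set w := ((starRingEnd ℂ) z)⁻¹ with hw
    rw [hfz, poly_eval_abs g w, poly_eval_abs g z]
    set c := Complex.abs g.leadingCoeff with hc
    have hcpos : 0 < c := Complex.abs.pos (Polynomial.leadingCoeff_ne_zero.mpr hg)
    -- |z|^d * prod |w - a| = prod |1 - conj a * z|
    have hstep1 : Complex.abs z ^ g.natDegree
          * (g.roots.map (fun a => Complex.abs (w - a))).prod
        = (g.roots.map (fun a => Complex.abs (1 - (starRingEnd ℂ) a * z))).prod := by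
      rw [← hd, ← Multiset.prod_replicate, ← Multiset.map_const, ← Multiset.prod_map_mul]
      apply congrArg
      apply Multiset.map_congr rfl
      intro a _
      exact abs_mul_sub_inv_conj z a hz0
    obtain ⟨hb0, hble⟩ := blaschke_prod_le g.roots hroots' hz1.le
    have hksplit : Complex.abs z ^ k
        = Complex.abs z ^ (k - g.natDegree) * Complex.abs z ^ g.natDegree := by
      rw [← pow_add]
      congr 1
      omega
    have hchain : Complex.abs z ^ k * (c * (g.roots.map (fun a => Complex.abs (w - a))).prod)
        = Complex.abs z ^ (k - g.natDegree)
          * (c * (g.roots.map (fun a => Complex.abs (1 - (starRingEnd ℂ) a * z))).prod) := by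
      rw [hksplit, ← hstep1]
      ring
    rw [hchain]
    have hpow : Complex.abs z ^ (k - g.natDegree) < 1 :=
      pow_lt_one₀ (Complex.abs.nonneg z) hz1 (by omega)
    have h2 : c * (g.roots.map (fun a => Complex.abs (1 - (starRingEnd ℂ) a * z))).prod
        ≤ c * (g.roots.map (fun a => Complex.abs (z - a))).prod :=
      mul_le_mul_of_nonneg_left hble hcpos.le
    have h3 : 0 < c * (g.roots.map (fun a => Complex.abs (z - a))).prod := by
      have := poly_eval_abs g z
      rw [← hc] at this
      rw [← this]
      exact hgpos
    calc Complex.abs z ^ (k - g.natDegree)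
          * (c * (g.roots.map (fun a => Complex.abs (1 - (starRingEnd ℂ) a * z))).prod)
        ≤ Complex.abs z ^ (k - g.natDegree)
          * (c * (g.roots.map (fun a => Complex.abs (z - a))).prod) :=
          mul_le_mul_of_nonneg_left h2 (pow_nonneg (Complex.abs.nonneg z) _)
      _ < c * (g.roots.map (fun a => Complex.abs (z - a))).prod :=
          (mul_lt_iff_lt_one_left h3).mpr hpow

end Main

lemma main_le (g f : Polynomial ℂ) (hg : g ≠ 0)
    (hroots : ∀ z : ℂ, g.eval z = 0 → 1 ≤ Complex.abs z)
    (k : ℕ) (hk : g.natDegree < k) (lam : ℂ) (hlam : Complex.abs lam = 1)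
    (hf : f = Polynomial.C lam *
      ∑ j ∈ Finset.range (g.natDegree + 1),
        Polynomial.C ((starRingEnd ℂ) (g.coeff j)) * Polynomial.X ^ (k - j))
    (α β : ℂ) (hβ : β ≠ 0) (hle : Complex.abs α ≤ Complex.abs β) :
    ∫ θ in (0:ℝ)..(2*π),
        Real.log (Complex.abs ((Polynomial.C α * f + Polynomial.C β * g).eval (circ θ)))
      = 2*π*(Real.log (Complex.abs β) + Real.log (Complex.abs (g.eval 0))) := by
  set h : Polynomial ℂ := Polynomial.C α * f + Polynomial.C β * g with hh
  have hg0 : g.eval 0 ≠ 0 := by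
    intro h0
    have := hroots 0 h0
    simp at this
    linarith
  have hh0 : h.eval 0 = β * g.eval 0 := by
    rw [hh]
    simp [Polynomial.eval_add, Polynomial.eval_mul, Polynomial.eval_C,
      evalF0 g f k lam hk hf]
  have hhne : h ≠ 0 := by
    intro hzero
    rw [hzero] at hh0
    simp at hh0
    rcases hh0 with h1 | h1
    · exact hβ h1
    · exact hg0 h1
  have hhroots : ∀ z : ℂ, h.eval z = 0 → 1 ≤ Complex.abs z := by
    intro z hz
    by_contra hlt
    push_neg at hlt
    have hflt := abs_f_lt_abs_g g f k lam hg hroots hk hlam hf z hlt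
    have hgz : g.eval z ≠ 0 := by
      intro h0
      have := hroots z h0
      linarith
    have hev : α * f.eval z + β * g.eval z = 0 := by
      rw [hh] at hz
      simpa [Polynomial.eval_add, Polynomial.eval_mul, Polynomial.eval_C] using hz
    have heq : Complex.abs (α * f.eval z) = Complex.abs (β * g.eval z) := by
      have : α * f.eval z = -(β * g.eval z) := by linear_combination hev
      rw [this, Complex.abs.map_neg]
    rw [map_mul, map_mul] at heq
    have hβpos : 0 < Complex.abs β := Complex.abs.pos hβ
    have h1 : Complex.abs α * Complex.abs (f.eval z)
        ≤ Complex.abs β * Complex.abs (f.eval z) :=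
      mul_le_mul_of_nonneg_right hle (Complex.abs.nonneg _)
    have h2 : Complex.abs β * Complex.abs (f.eval z)
        < Complex.abs β * Complex.abs (g.eval z) :=
      mul_lt_mul_of_pos_left hflt hβpos
    linarith
  obtain ⟨_, hval⟩ := poly_integral h hhne hhroots
  rw [hval, hh0, map_mul,
    Real.log_mul (Complex.abs.ne_zero hβ) (Complex.abs.ne_zero hg0)]

theorem mahler_alpha_f_add_beta_g_aux (g f : Polynomial ℂ) (hg : g ≠ 0)
    (hroots : ∀ z : ℂ, g.eval z = 0 → 1 ≤ Complex.abs z)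
    (k : ℕ) (hk : g.natDegree < k) (lam : ℂ) (hlam : Complex.abs lam = 1)
    (hf : f = Polynomial.C lam *
      ∑ j ∈ Finset.range (g.natDegree + 1),
        Polynomial.C ((starRingEnd ℂ) (g.coeff j)) * Polynomial.X ^ (k - j))
    (α β : ℂ) (hαβ : ¬(α = 0 ∧ β = 0)) :
    (1 / (2 * Real.pi)) *
        ∫ θ in (0:ℝ)..(2 * Real.pi),
          Real.log (Complex.abs ((Polynomial.C α * f + Polynomial.C β * g).eval (circ θ)))
      = (1 / (2 * Real.pi)) *
          ∫ θ in (0:ℝ)..(2 * Real.pi), Real.log (Complex.abs (g.eval (circ θ)))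
        + Real.log (max (Complex.abs α) (Complex.abs β)) := by
  have hπ : (π:ℝ) ≠ 0 := Real.pi_ne_zero
  obtain ⟨hgint, hgval⟩ := poly_integral g hg hroots
  have hrhs : ∫ θ in (0:ℝ)..(2 * Real.pi),
      (Real.log (Complex.abs (g.eval (circ θ)))
        + Real.log (max (Complex.abs α) (Complex.abs β)))
      = 2*π*Real.log (Complex.abs (g.eval 0))
        + 2*π*Real.log (max (Complex.abs α) (Complex.abs β)) := by
    rw [intervalIntegral.integral_add hgint intervalIntegrable_const, hgval,
      intervalIntegral.integral_const, smul_eq_mul]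
    ring
  rw [hrhs]
  by_cases hc : Complex.abs α ≤ Complex.abs β
  · have hβ : β ≠ 0 := by
      intro hβ0
      apply hαβ
      refine ⟨?_, hβ0⟩
      rw [hβ0] at hc
      simp at hc
      exact hc
    rw [main_le g f hg hroots k hk lam hlam hf α β hβ hc, max_eq_right hc]
    field_simp
    ring
  · push_neg at hc
    have hα : α ≠ 0 := by
      intro hα0
      rw [hα0] at hc
      simp at hc
      exact absurd hc (not_lt.mpr (Complex.abs.nonneg β))
    have hα' : (starRingEnd ℂ) α ≠ 0 := by simpa using hα
    have hle' : Complex.abs ((starRingEnd ℂ) β) ≤ Complex.abs ((starRingEnd ℂ) α) := by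
      rw [Complex.abs_conj, Complex.abs_conj]
      exact hc.le
    -- pointwise identity on the circle
    have hpt : ∀ θ : ℝ,
        Complex.abs ((Polynomial.C α * f + Polynomial.C β * g).eval (circ θ))
          = Complex.abs ((Polynomial.C ((starRingEnd ℂ) β) * f
              + Polynomial.C ((starRingEnd ℂ) α) * g).eval (circ θ)) := by
      intro θ
      set z := circ θ with hzdef
      have hz0 : z ≠ 0 := circ_ne_zero θ
      have hzc : z * (starRingEnd ℂ) z = 1 := circ_mul_conj θ
      have hinv : ((starRingEnd ℂ) z)⁻¹ = z := by
        rw [eq_inv_of_mul_eq_one_right hzc, inv_inv]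
      have hfz : f.eval z = lam * z^k * (starRingEnd ℂ) (g.eval z) := by
        rw [evalF g f k lam hk hf z hz0, hinv]
      set G := g.eval z with hG
      have h1 : lam * (starRingEnd ℂ) lam = 1 := by
        rw [Complex.mul_conj]
        norm_cast
        rw [Complex.normSq_eq_abs, hlam, one_pow]
      have h2 : z^k * (starRingEnd ℂ) (z^k) = 1 := by
        rw [map_pow, ← mul_pow, hzc, one_pow]
      have hkey : (starRingEnd ℂ) β * (lam * z^k * (starRingEnd ℂ) G) + (starRingEnd ℂ) α * G
          = lam * z^k * (starRingEnd ℂ) (α * (lam * z^k * (starRingEnd ℂ) G) + β * G) := by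
        have hexp : (starRingEnd ℂ) (α * (lam * z^k * (starRingEnd ℂ) G) + β * G)
            = (starRingEnd ℂ) α * ((starRingEnd ℂ) lam * ((starRingEnd ℂ) (z^k) * G))
              + (starRingEnd ℂ) β * (starRingEnd ℂ) G := by
          simp only [map_add, map_mul, Complex.conj_conj]
          ring
        rw [hexp]
        linear_combination (-((starRingEnd ℂ) α * G * (z^k * (starRingEnd ℂ) (z^k)))) * h1
          + (-((starRingEnd ℂ) α * G)) * h2
      simp only [Polynomial.eval_add, Polynomial.eval_mul, Polynomial.eval_C, hfz, ← hG]
      rw [hkey, map_mul, map_mul, hlam, one_mul, map_pow, circ_abs, one_pow, one_mul,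
        Complex.abs_conj]
    rw [intervalIntegral.integral_congr (fun θ _ => by rw [hpt θ])]
    rw [main_le g f hg hroots k hk lam hlam hf ((starRingEnd ℂ) β) ((starRingEnd ℂ) α)
      hα' hle']
    rw [Complex.abs_conj, max_eq_left hc.le]
    field_simp
    ring

/-- If all roots of `g` lie outside the open unit disc, `k > deg g`, `|λ| = 1` and
`f(x) = λ xᵏ ḡ(1/x)`, then for any `α, β ∈ ℂ` not both zero,
`m(α f + β g) = m(g) + log max{|α|, |β|}`. -/
theorem mahler_alpha_f_add_beta_g (g f : Polynomial ℂ) (hg : g ≠ 0)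
    (hroots : ∀ z : ℂ, g.eval z = 0 → 1 ≤ ‖z‖)
    (k : ℕ) (hk : g.natDegree < k) (lam : ℂ) (hlam : ‖lam‖ = 1)
    (hf : f = Polynomial.C lam *
      ∑ j ∈ Finset.range (g.natDegree + 1),
        Polynomial.C ((starRingEnd ℂ) (g.coeff j)) * Polynomial.X ^ (k - j))
    (α β : ℂ) (hαβ : ¬(α = 0 ∧ β = 0)) :
    (1 / (2 * Real.pi)) *
        ∫ θ in (0:ℝ)..(2 * Real.pi),
          Real.log (‖(Polynomial.C α * f + Polynomial.C β * g).eval (circ θ)‖)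
      = (1 / (2 * Real.pi)) *
          ∫ θ in (0:ℝ)..(2 * Real.pi), Real.log (‖g.eval (circ θ)‖)
        + Real.log (max (‖α‖) (‖β‖)) :=
  mahler_alpha_f_add_beta_g_aux g f hg hroots k hk lam hlam hf α β hαβ
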